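/- For every cyclic sentence S over {A, X, B}, the value |S| computed in the original puzzle equals the value |S| computed in the tight puzzle. (In particular, establishing the reversal symmetry |S| = |S̄| for the tight puzzle is equivalent to establishing it for the original puzzle.) -/

import Mathlib

/-!
The "tight puzzle" of Schwartz–Tabachnikov.  Strings over the alphabet `{A, X, B}`;
word list (coefficient, weight): `X (1,0)`, `XA (1,1)`, `XAA (1,1)`, `AXA (2,1)`,
`AAA (-1,1)`, `BA (-1,1)`, `ABA (-1,1)`, `XXA (-1,1)`; in a parsing the word `X` may
never be immediately followed by the word `XA` or the word `BA`.
-/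

open scoped Classical

/-- The three-letter alphabet. -/
inductive PLetter | A | X | B
deriving DecidableEq

/-- Strings over the alphabet. -/
abbrev PWord := List PLetter

/-- The tight puzzle word list. -/
def tightWords : List PWord :=
  [[PLetter.X], [PLetter.X, PLetter.A], [PLetter.X, PLetter.A, PLetter.A],
   [PLetter.A, PLetter.X, PLetter.A], [PLetter.A, PLetter.A, PLetter.A],
   [PLetter.B, PLetter.A], [PLetter.A, PLetter.B, PLetter.A],
   [PLetter.X, PLetter.X, PLetter.A]]

/-- Coefficients of the words of the tight puzzle (`AXA ↦ 2`; `AAA, BA, ABA, XXA ↦ -1`;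
`X, XA, XAA ↦ 1`). -/
def tightCoeff (w : PWord) : ℤ :=
  if w = [PLetter.A, PLetter.X, PLetter.A] then 2
  else if w = [PLetter.A, PLetter.A, PLetter.A] ∨ w = [PLetter.B, PLetter.A] ∨
      w = [PLetter.A, PLetter.B, PLetter.A] ∨ w = [PLetter.X, PLetter.X, PLetter.A] then -1
  else 1

/-- Weights of the words: the word `X` has weight `0`, all other words weight `1`. -/
def wordWt (w : PWord) : ℕ := if w = [PLetter.X] then 0 else 1

/-- The forbidden adjacency: the word `X` immediately followed by `XA` or `BA`. -/
def Bad (u v : PWord) : Prop :=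
  u = [PLetter.X] ∧ (v = [PLetter.X, PLetter.A] ∨ v = [PLetter.B, PLetter.A])

/-- The contribution `coefficient · t^weight ∈ ℤ[t]` of a parsing `L`. -/
noncomputable def parseVal (c : PWord → ℤ) (L : List PWord) : Polynomial ℤ :=
  Polynomial.C ((L.map c).prod) * Polynomial.X ^ ((L.map wordWt).sum)

/-- `L` is a parsing in the tight puzzle: all its words are on the word list and the
forbidden adjacency never occurs. -/
def TightChain (L : List PWord) : Prop :=
  (∀ w ∈ L, w ∈ tightWords) ∧ List.Chain' (fun u v => ¬ Bad u v) L

/-- The *core* of a string: what remains after deleting all leading and trailing `X`s. -/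
def core (s : PWord) : PWord :=
  ((s.dropWhile (· == PLetter.X)).reverse.dropWhile (· == PLetter.X)).reverse

/-- `L` is a parsing of the bi-infinite string `⋯XX·W·XX⋯` (with the infinitely many
padding `X`s parsed as copies of the word `X` and trimmed away): the words of `L`
concatenate to `W` up to padding by `X`s on either side, `L` neither starts nor ends
with the word `X`, and (because of the padding `X`-words on the left) the first word
of `L` is not `XA` or `BA`. -/
def IsOpenParsing (W : PWord) (L : List PWord) : Prop :=
  TightChain L ∧ core L.flatten = core W ∧
  ∀ h : L ≠ [],
    L.head h ≠ [PLetter.X] ∧ L.head h ≠ [PLetter.X, PLetter.A] ∧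
    L.head h ≠ [PLetter.B, PLetter.A] ∧ L.getLast h ≠ [PLetter.X]

/-- `(r, L)` is a parsing of the cyclic string `(W)`: reading the necklace of the
letters of `W` starting at position `r`, the words of `L` concatenate to it, the
forbidden adjacency does not occur (cyclically), and `r < (last word).length`
(so that every parsing of the necklace is counted exactly once). -/
def IsCyclicParsing (W : PWord) (r : ℕ) (L : List PWord) : Prop :=
  TightChain L ∧
  ∃ h : L ≠ [], L.flatten = W.rotate r ∧ r < (L.getLast h).length ∧
    ¬ Bad (L.getLast h) (L.head h)

/-- `L` is a parsing of the locked string `[W]`: the words of `L` concatenate exactly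
to `W`, no padding allowed. -/
def IsLockedParsing (W : PWord) (L : List PWord) : Prop :=
  TightChain L ∧ L.flatten = W

/-- The nine words of both puzzles, as a function (used to enumerate parsings). -/
def wordOf : Fin 9 → PWord :=
  ![[PLetter.X], [PLetter.X, PLetter.A], [PLetter.X, PLetter.A, PLetter.A],
    [PLetter.X, PLetter.B, PLetter.A], [PLetter.A, PLetter.X, PLetter.A],
    [PLetter.A, PLetter.A, PLetter.A], [PLetter.B, PLetter.A],
    [PLetter.A, PLetter.B, PLetter.A], [PLetter.X, PLetter.X, PLetter.A]]

/-- The open value `|W| ∈ ℤ[t]`: the sum of `coefficient · t^weight` over all parsings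
of the bi-infinite string `⋯XX·W·XX⋯` (any such parsing consists of at most
`W.length + 2` words). -/
noncomputable def openVal (W : PWord) : Polynomial ℤ :=
  ∑ k ∈ Finset.range (W.length + 3), ∑ f : Fin k → Fin 9,
    if IsOpenParsing W ((List.ofFn f).map wordOf) then
      parseVal tightCoeff ((List.ofFn f).map wordOf)
    else 0

/-- The cyclic value `|(W)| ∈ ℤ[t]`: the sum of `coefficient · t^weight` over all
parsings of the cyclic string `(W)`. -/
noncomputable def cycVal (W : PWord) : Polynomial ℤ :=
  ∑ r ∈ Finset.range W.length, ∑ k ∈ Finset.range (W.length + 1), ∑ f : Fin k → Fin 9,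
    if IsCyclicParsing W r ((List.ofFn f).map wordOf) then
      parseVal tightCoeff ((List.ofFn f).map wordOf)
    else 0

/-- The locked value `|[W]| ∈ ℤ[t]`: the sum of `coefficient · t^weight` over all
parsings whose concatenation is exactly `W`. -/
noncomputable def lockVal (W : PWord) : Polynomial ℤ :=
  ∑ k ∈ Finset.range (W.length + 1), ∑ f : Fin k → Fin 9,
    if IsLockedParsing W ((List.ofFn f).map wordOf) then
      parseVal tightCoeff ((List.ofFn f).map wordOf)
    else 0

/-- The original puzzle word list (the tight list together with `XBA`). -/
def origWords : List PWord :=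
  tightWords ++ [[PLetter.X, PLetter.B, PLetter.A]]

/-- Coefficients of the words of the original puzzle (`AXA ↦ 2`; `XXA ↦ -2`;
`AAA, BA, ABA ↦ -1`; `X, XA, XAA, XBA ↦ 1`). -/
def origCoeff (w : PWord) : ℤ :=
  if w = [PLetter.A, PLetter.X, PLetter.A] then 2
  else if w = [PLetter.X, PLetter.X, PLetter.A] then -2
  else if w = [PLetter.A, PLetter.A, PLetter.A] ∨ w = [PLetter.B, PLetter.A] ∨
      w = [PLetter.A, PLetter.B, PLetter.A] then -1
  else 1

/-- `(r, L)` is a parsing of the cyclic string `(W)` in the original puzzle (all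
parsings allowed, no adjacency restriction): reading the necklace of the letters of
`W` starting at position `r`, the words of `L` concatenate to it, and
`r < (last word).length` (so that every parsing of the necklace is counted exactly
once). -/
def IsOrigCyclicParsing (W : PWord) (r : ℕ) (L : List PWord) : Prop :=
  (∀ w ∈ L, w ∈ origWords) ∧
  ∃ h : L ≠ [], L.flatten = W.rotate r ∧ r < (L.getLast h).length

/-- The cyclic value `|(W)| ∈ ℤ[t]` in the original puzzle. -/
noncomputable def origCycVal (W : PWord) : Polynomial ℤ :=
  ∑ r ∈ Finset.range W.length, ∑ k ∈ Finset.range (W.length + 1), ∑ f : Fin k → Fin 9,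
    if IsOrigCyclicParsing W r ((List.ofFn f).map wordOf) then
      parseVal origCoeff ((List.ofFn f).map wordOf)
    else 0

section Aux


def listsLen (α : Type*) [DecidableEq α] [Fintype α] : ℕ → Finset (List α)
  | 0 => {[]}
  | k+1 => (Finset.univ (α := α) ×ˢ listsLen α k).image fun p => p.1 :: p.2

variable {α : Type*} [DecidableEq α] [Fintype α]

lemma mem_listsLen (l : List α) (k : ℕ) : l ∈ listsLen α k ↔ l.length = k := by
  induction k generalizing l with
  | zero => simp [listsLen, List.length_eq_zero_iff]
  | succ k ih =>
    simp only [listsLen, Finset.mem_image, Finset.mem_product, Finset.mem_univ, true_and]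
    constructor
    · rintro ⟨⟨a, t⟩, ht, rfl⟩
      exact congrArg Nat.succ ((ih t).1 ht)
    · intro h
      cases l with
      | nil => simp at h
      | cons a t =>
        exact ⟨(a, t), by simp_all [ih], rfl⟩

lemma sum_ofFn_eq {M : Type*} [AddCommMonoid M] {g : List α → M} (k : ℕ) :
    ∑ f : Fin k → α, g (List.ofFn f) = ∑ l ∈ listsLen α k, g l := by
  induction k generalizing g with
  | zero => simp [listsLen]
  | succ k ih =>
    rw [← Equiv.sum_comp (Fin.consEquiv (fun _ : Fin (k+1) => α))
      (fun f => g (List.ofFn f))]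
    rw [Fintype.sum_prod_type]
    have : ∀ (a : α) (f : Fin k → α),
        List.ofFn ((Fin.consEquiv (fun _ : Fin (k+1) => α)) (a, f)) = a :: List.ofFn f := by
      intro a f
      simp [Fin.consEquiv, List.ofFn_succ]
    simp only [this]
    rw [listsLen, Finset.sum_image (by intro p hp q hq h; simpa [Prod.ext_iff] using h)]
    rw [Finset.sum_product]
    exact Finset.sum_congr rfl fun a _ => ih (g := fun l => g (a :: l))

def listsLE (α : Type*) [DecidableEq α] [Fintype α] (n : ℕ) : Finset (List α) :=
  (Finset.range (n+1)).biUnion (listsLen α)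

lemma mem_listsLE (l : List α) (n : ℕ) : l ∈ listsLE α n ↔ l.length ≤ n := by
  simp only [listsLE, Finset.mem_biUnion, Finset.mem_range, mem_listsLen]
  constructor
  · rintro ⟨k, hk, rfl⟩; omega
  · intro h; exact ⟨l.length, by omega, rfl⟩

lemma sum_listsLE {M : Type*} [AddCommMonoid M] (g : List α → M) (n : ℕ) :
    ∑ k ∈ Finset.range (n+1), ∑ l ∈ listsLen α k, g l = ∑ l ∈ listsLE α n, g l := by
  rw [listsLE, Finset.sum_biUnion]
  intro i hi j hj hij
  simp only [Finset.disjoint_left]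
  intro l hl hl'
  rw [mem_listsLen] at hl hl'
  omega

end Aux

section Words

def wX : PWord := [PLetter.X]
def wXA : PWord := [PLetter.X, PLetter.A]
def wBA : PWord := [PLetter.B, PLetter.A]
def wXXA : PWord := [PLetter.X, PLetter.X, PLetter.A]
def wXBA : PWord := [PLetter.X, PLetter.B, PLetter.A]

lemma wordOf_mem_orig (i : Fin 9) : wordOf i ∈ origWords := by
  fin_cases i <;> decide

def idxOf (w : PWord) : Fin 9 :=
  if w = [PLetter.X] then 0
  else if w = [PLetter.X, PLetter.A] then 1
  else if w = [PLetter.X, PLetter.A, PLetter.A] then 2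
  else if w = [PLetter.X, PLetter.B, PLetter.A] then 3
  else if w = [PLetter.A, PLetter.X, PLetter.A] then 4
  else if w = [PLetter.A, PLetter.A, PLetter.A] then 5
  else if w = [PLetter.B, PLetter.A] then 6
  else if w = [PLetter.A, PLetter.B, PLetter.A] then 7
  else 8

lemma orig_mem_iff (w : PWord) : w ∈ origWords ↔
    w = wX ∨ w = wXA ∨ w = [PLetter.X, PLetter.A, PLetter.A] ∨ w = wXBA ∨
    w = [PLetter.A, PLetter.X, PLetter.A] ∨ w = [PLetter.A, PLetter.A, PLetter.A] ∨
    w = wBA ∨ w = [PLetter.A, PLetter.B, PLetter.A] ∨ w = wXXA := by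
  simp [origWords, tightWords, wX, wXA, wBA, wXXA, wXBA]
  tauto

lemma wordOf_idxOf {w : PWord} (h : w ∈ origWords) : wordOf (idxOf w) = w := by
  rw [orig_mem_iff] at h
  rcases h with h|h|h|h|h|h|h|h|h <;> subst h <;> rfl

/-- lists of at most `n` words from the nine-word list -/
noncomputable def WL (n : ℕ) : Finset (List PWord) :=
  (listsLE (Fin 9) n).image (List.map wordOf)

lemma wordOf_injective : Function.Injective wordOf := by
  intro i j h
  fin_cases i <;> fin_cases j <;> simp_all <;> exact absurd h (by decide)

lemma mem_WL {L : List PWord} {n : ℕ} : L ∈ WL n ↔ L.length ≤ n ∧ ∀ w ∈ L, w ∈ origWords := by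
  constructor
  · rintro h
    simp only [WL, Finset.mem_image] at h
    obtain ⟨l, hl, rfl⟩ := h
    rw [mem_listsLE] at hl
    refine ⟨by simpa using hl, ?_⟩
    intro w hw
    simp only [List.mem_map] at hw
    obtain ⟨i, _, rfl⟩ := hw
    exact wordOf_mem_orig i
  · rintro ⟨hn, hw⟩
    simp only [WL, Finset.mem_image]
    refine ⟨L.map idxOf, by rw [mem_listsLE]; simpa using hn, ?_⟩
    rw [List.map_map]
    conv_rhs => rw [show L = L.map id from (List.map_id L).symm]
    exact List.map_congr_left fun w h => wordOf_idxOf (hw w h)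

/-- reindex a sum over `Fin k → Fin 9` tuples as a sum over word lists -/
lemma sum_words {M : Type*} [AddCommMonoid M] (n : ℕ) (g : List PWord → M) :
    (∑ k ∈ Finset.range (n+1), ∑ f : Fin k → Fin 9, g ((List.ofFn f).map wordOf)) =
      ∑ L ∈ WL n, g L := by
  have h1 : ∀ k, (∑ f : Fin k → Fin 9, g ((List.ofFn f).map wordOf)) =
      ∑ l ∈ listsLen (Fin 9) k, g (l.map wordOf) := fun k => sum_ofFn_eq (g := fun l => g (l.map wordOf)) k
  simp only [h1]
  rw [sum_listsLE]
  exact (Finset.sum_image (by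
    intro p _ q _ h
    exact List.map_injective_iff.2 wordOf_injective h)).symm

end Words

section ParseVal

lemma parseVal_append (c : PWord → ℤ) (A B : List PWord) :
    parseVal c (A ++ B) = parseVal c A * parseVal c B := by
  simp only [parseVal, List.map_append, List.prod_append, List.sum_append, map_mul, pow_add]
  ring

lemma parseVal_rot (c : PWord → ℤ) (a : PWord) (L : List PWord) :
    parseVal c (a :: L) = parseVal c (L ++ [a]) := by
  have h1 : a :: L = [a] ++ L := rfl
  rw [h1, parseVal_append, parseVal_append, mul_comm]

lemma parseVal_congr {c c' : PWord → ℤ} {L : List PWord} (h : ∀ w ∈ L, c w = c' w) :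
    parseVal c L = parseVal c' L := by
  simp only [parseVal]
  rw [List.map_congr_left h]

lemma parseVal_zero {c : PWord → ℤ} {L : List PWord} {w : PWord} (hw : w ∈ L) (hc : c w = 0) :
    parseVal c L = 0 := by
  simp only [parseVal]
  have : (0 : ℤ) ∈ List.map c L := by
    simpa [hc] using List.mem_map_of_mem (f := c) hw
  rw [List.prod_eq_zero this]
  simp

end ParseVal

section MergeSplit

/-- A word that can be split: `XXA` or `XBA`. -/
def Mg (w : PWord) : Prop := w = wXXA ∨ w = wXBA

instance : DecidablePred Mg := fun w => by unfold Mg; infer_instance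

def splitTok (p : PWord × Bool) : List PWord :=
  if p.2 then [wX, p.1.tail] else [p.1]

def splitL (τ : List (PWord × Bool)) : List PWord := τ.flatMap splitTok

/-- marks are only on splittable words -/
def Marks (τ : List (PWord × Bool)) : Prop := ∀ p ∈ τ, p.2 = true → Mg p.1

def mergeMark : List PWord → List (PWord × Bool)
  | [] => []
  | [w] => [(w, false)]
  | u :: v :: t =>
      if u = wX ∧ (v = wXA ∨ v = wBA) then (u ++ v, true) :: mergeMark t
      else (u, false) :: mergeMark (v :: t)

@[simp] lemma splitL_nil : splitL [] = [] := rfl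

@[simp] lemma splitL_cons (p : PWord × Bool) (τ : List (PWord × Bool)) :
    splitL (p :: τ) = splitTok p ++ splitL τ := rfl

lemma splitL_append (τ τ' : List (PWord × Bool)) :
    splitL (τ ++ τ') = splitL τ ++ splitL τ' := by
  simp [splitL]

lemma splitTok_ne_nil (p : PWord × Bool) : splitTok p ≠ [] := by
  unfold splitTok; split <;> simp

lemma splitL_eq_nil_iff (τ : List (PWord × Bool)) : splitL τ = [] ↔ τ = [] := by
  cases τ with
  | nil => simp
  | cons p t => simp [splitTok_ne_nil p, List.append_eq_nil_iff]

lemma zip_fst_snd {β γ : Type*} (τ : List (β × γ)) :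
    (τ.map Prod.fst).zip (τ.map Prod.snd) = τ := by
  induction τ with
  | nil => rfl
  | cons p t ih => simp [ih]

lemma splitL_mergeMark (l : List PWord) : splitL (mergeMark l) = l := by
  induction l using mergeMark.induct with
  | case1 => rfl
  | case2 w => rfl
  | case3 u v t h ih =>
      rw [mergeMark, if_pos h]
      obtain ⟨rfl, h2⟩ := h
      rcases h2 with rfl | rfl <;> simp [splitTok, ih, wX, wXA, wBA]
  | case4 u v t h ih =>
      rw [mergeMark, if_neg h]
      simp [splitTok, ih]

lemma mergeMark_eq_nil_iff (l : List PWord) : mergeMark l = [] ↔ l = [] := by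
  induction l using mergeMark.induct with
  | case1 => simp [mergeMark]
  | case2 w => simp [mergeMark]
  | case3 u v t h ih => rw [mergeMark, if_pos h]; simp
  | case4 u v t h ih => rw [mergeMark, if_neg h]; simp

lemma mergeMark_marks (l : List PWord) : Marks (mergeMark l) := by
  induction l using mergeMark.induct with
  | case1 => intro p hp; simp [mergeMark] at hp
  | case2 w => intro p hp; simp [mergeMark] at hp; simp [hp]
  | case3 u v t h ih =>
      rw [mergeMark, if_pos h]
      intro p hp hb
      rcases List.mem_cons.1 hp with rfl | hp
      · obtain ⟨rfl, h2⟩ := h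
        rcases h2 with rfl | rfl
        · left; rfl
        · right; rfl
      · exact ih p hp hb
  | case4 u v t h ih =>
      rw [mergeMark, if_neg h]
      intro p hp hb
      rcases List.mem_cons.1 hp with rfl | hp
      · simp at hb
      · exact ih p hp hb

lemma mergeMark_fst_flatten (l : List PWord) :
    ((mergeMark l).map Prod.fst).flatten = l.flatten := by
  induction l using mergeMark.induct with
  | case1 => rfl
  | case2 w => simp [mergeMark]
  | case3 u v t h ih => rw [mergeMark, if_pos h]; simp [ih]
  | case4 u v t h ih => rw [mergeMark, if_neg h]; simp [ih]

lemma mergeMark_head (v : PWord) (t : List PWord) :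
    ∃ x b, (mergeMark (v :: t)).head? = some (x, b) ∧ (x = v ∨ x.length = 3) := by
  cases t with
  | nil => exact ⟨v, false, rfl, Or.inl rfl⟩
  | cons w s =>
      by_cases h : v = wX ∧ (w = wXA ∨ w = wBA)
      · refine ⟨v ++ w, true, by rw [mergeMark, if_pos h]; rfl, Or.inr ?_⟩
        obtain ⟨rfl, h2⟩ := h
        rcases h2 with rfl | rfl <;> rfl
      · exact ⟨v, false, by rw [mergeMark, if_neg h]; rfl, Or.inl rfl⟩

lemma not_bad_of_len3 (u x : PWord) (hx : x.length = 3) : ¬ Bad u x := by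
  rintro ⟨_, h | h⟩ <;> subst h <;> simp at hx

lemma mergeMark_chain (l : List PWord) :
    List.Chain' (fun a b => ¬ Bad a b) ((mergeMark l).map Prod.fst) := by
  induction l using mergeMark.induct with
  | case1 => simp [mergeMark, List.Chain', List.isChain_nil]
  | case2 w => simp [mergeMark, List.Chain', List.isChain_singleton]
  | case3 u v t h ih =>
      rw [mergeMark, if_pos h]
      rw [List.map_cons, List.Chain', List.isChain_cons]
      refine ⟨?_, ih⟩
      intro y hy
      rintro ⟨hyx, _⟩
      obtain ⟨rfl, h2⟩ := h
      apply absurd hyx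
      rcases h2 with rfl | rfl <;> simp [wX, wXA, wBA]
  | case4 u v t h ih =>
      rw [mergeMark, if_neg h]
      rw [List.map_cons, List.Chain', List.isChain_cons]
      refine ⟨?_, ih⟩
      intro y hy
      obtain ⟨x, b, hx, hcase⟩ := mergeMark_head v t
      have hh : (List.map Prod.fst (mergeMark (v :: t))).head? = some x := by
        rw [List.head?_map, hx]; rfl
      rw [hh] at hy
      simp only [Option.mem_def, Option.some_inj] at hy
      subst hy
      rcases hcase with rfl | hlen
      · rintro ⟨h1, h2⟩; exact h ⟨h1, h2⟩
      · exact not_bad_of_len3 u x hlen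

lemma mergeMark_getLast? (l : List PWord) (x : PWord) (hx : l.getLast? = some x) :
    (mergeMark l).getLast? = some (x, false) ∨
      ((x = wXA ∨ x = wBA) ∧ (mergeMark l).getLast? = some (wX ++ x, true)) := by
  induction l using mergeMark.induct with
  | case1 => simp at hx
  | case2 w => simp at hx; subst hx; left; rfl
  | case3 u v t h ih =>
      rw [mergeMark, if_pos h]
      cases t with
      | nil =>
          simp at hx; subst hx
          right
          obtain ⟨rfl, h2⟩ := h
          exact ⟨h2, rfl⟩
      | cons w s =>
          rw [List.getLast?_cons_cons, List.getLast?_cons_cons] at hx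
          have hne : mergeMark (w :: s) ≠ [] := by
            rw [Ne, mergeMark_eq_nil_iff]; simp
          rcases ih hx with h1 | ⟨h2, h3⟩
          · left
            rw [List.getLast?_cons, h1]
            cases hmm : mergeMark (w :: s) <;> simp_all [List.getLast?_cons]
          · right
            refine ⟨h2, ?_⟩
            rw [List.getLast?_cons, h3]
            cases hmm : mergeMark (w :: s) <;> simp_all [List.getLast?_cons]
  | case4 u v t h ih =>
      rw [mergeMark, if_neg h]
      rw [List.getLast?_cons_cons] at hx
      have hne : mergeMark (v :: t) ≠ [] := by
        rw [Ne, mergeMark_eq_nil_iff]; simp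
      rcases ih hx with h1 | ⟨h2, h3⟩
      · left
        cases hmm : mergeMark (v :: t) <;> simp_all [List.getLast?_cons]
      · right
        refine ⟨h2, ?_⟩
        cases hmm : mergeMark (v :: t) <;> simp_all [List.getLast?_cons]
lemma Mg_cons_tail {w : PWord} (h : Mg w) : w = wX ++ w.tail ∧ (w.tail = wXA ∨ w.tail = wBA) := by
  rcases h with rfl | rfl
  · exact ⟨rfl, Or.inl rfl⟩
  · exact ⟨rfl, Or.inr rfl⟩

lemma splitL_head? (τ : List (PWord × Bool)) (p : PWord × Bool) (hp : τ.head? = some p) :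
    (splitL τ).head? = some (if p.2 then wX else p.1) := by
  cases τ with
  | nil => simp at hp
  | cons q t =>
      have hq : p = q := by simpa using hp.symm
      subst hq
      rw [splitL_cons, List.head?_append]
      by_cases hb : p.2 <;> simp [splitTok, hb]

lemma splitL_getLast? (τ : List (PWord × Bool)) (p : PWord × Bool) (hp : τ.getLast? = some p) :
    (splitL τ).getLast? = some (if p.2 then p.1.tail else p.1) := by
  have hne : τ ≠ [] := fun h => by simp [h] at hp
  obtain ⟨t, rfl⟩ : ∃ t, τ = t ++ [p] := by
    refine ⟨τ.dropLast, ?_⟩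
    have h1 := List.dropLast_append_getLast hne
    rw [(List.getLast_eq_iff_getLast?_eq_some hne).2 hp] at h1
    exact h1.symm
  rw [splitL_append, List.getLast?_append]
  by_cases hb : p.2 <;> simp [splitL, splitTok, hb]

lemma mergeMark_splitL (τ : List (PWord × Bool)) (hm : Marks τ)
    (hc : List.Chain' (fun a b => ¬ Bad a b) (τ.map Prod.fst)) :
    mergeMark (splitL τ) = τ := by
  induction τ with
  | nil => rfl
  | cons p t ih =>
      obtain ⟨w, b⟩ := p
      have hmt : Marks t := fun q hq => hm q (List.mem_cons_of_mem _ hq)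
      have hct : List.Chain' (fun a b => ¬ Bad a b) (t.map Prod.fst) :=
        (List.isChain_cons.1 hc).2
      cases b with
      | true =>
          have hmg : Mg w := hm (w, true) (List.mem_cons_self) rfl
          obtain ⟨hw, htail⟩ := Mg_cons_tail hmg
          rw [splitL_cons]
          show mergeMark (wX :: w.tail :: splitL t) = _
          rw [mergeMark, if_pos ⟨rfl, htail⟩, ih hmt hct, ← hw]
      | false =>
          rw [splitL_cons]
          show mergeMark (w :: splitL t) = _
          cases hst : splitL t with
          | nil =>
              rw [splitL_eq_nil_iff] at hst
              subst hst
              rfl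
          | cons v s =>
              have hnotbad : ¬ (w = wX ∧ (v = wXA ∨ v = wBA)) := by
                cases t with
                | nil => simp at hst
                | cons q t' =>
                    have := splitL_head? (q :: t') q (by simp)
                    rw [hst] at this
                    simp only [List.head?_cons, Option.some_inj] at this
                    by_cases hb : q.2
                    · rw [if_pos hb] at this
                      subst this
                      rintro ⟨_, h | h⟩ <;> simp [wX, wXA, wBA] at h
                    · rw [if_neg hb] at this
                      subst this
                      have hbad : ¬ Bad w q.1 := by
                        have := List.isChain_cons.1 hc |>.1
                        exact this q.1 (by simp [List.head?_map])
                      exact fun hh => hbad ⟨hh.1, hh.2⟩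
              rw [mergeMark, if_neg hnotbad, ← hst, ih hmt hct]
lemma splitL_flatten (τ : List (PWord × Bool)) (hm : Marks τ) :
    (splitL τ).flatten = (τ.map Prod.fst).flatten := by
  induction τ with
  | nil => rfl
  | cons p t ih =>
      have hmt : Marks t := fun q hq => hm q (List.mem_cons_of_mem _ hq)
      rw [splitL_cons, List.map_cons, List.flatten_append, List.flatten_cons, ih hmt]
      congr 1
      by_cases hb : p.2
      · obtain ⟨hw, _⟩ := Mg_cons_tail (hm p (List.mem_cons_self) hb)
        simp [splitTok, hb, List.flatten_cons]
        exact hw.symm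
      · simp [splitTok, hb]

lemma splitL_words (τ : List (PWord × Bool)) (hm : Marks τ)
    (hw : ∀ p ∈ τ, p.1 ∈ origWords) :
    ∀ w ∈ splitL τ, w ∈ origWords := by
  intro w hmem
  simp only [splitL, List.mem_flatMap] at hmem
  obtain ⟨p, hp, hwp⟩ := hmem
  unfold splitTok at hwp
  by_cases hb : p.2
  · rw [if_pos hb] at hwp
    rcases Mg_cons_tail (hm p hp hb) with ⟨_, ht | ht⟩ <;>
      simp only [List.mem_cons, List.mem_singleton] at hwp <;>
      rcases hwp with rfl | rfl | h <;>
        first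
          | (rw [ht]; decide)
          | decide
          | simp at h
  · rw [if_neg hb] at hwp
    simp only [List.mem_singleton] at hwp
    subst hwp
    exact hw p hp

lemma length_le_flatten (L : List PWord) (h : ∀ w ∈ L, w ≠ []) :
    L.length ≤ L.flatten.length := by
  induction L with
  | nil => simp
  | cons w t ih =>
      have hw : w ≠ [] := h w (List.mem_cons_self)
      have h1 : 1 ≤ w.length := List.length_pos_iff.2 hw
      simp only [List.length_cons, List.flatten_cons, List.length_append]
      have := ih fun v hv => h v (List.mem_cons_of_mem _ hv)
      omega

/-- The cyclic merge of a parsing. -/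
noncomputable def MergeC (x : ℕ × List PWord) : ℕ × List PWord × List Bool :=
  if x.2.getLast? = some wX ∧ (x.2.head? = some wXA ∨ x.2.head? = some wBA) then
    let τ := mergeMark x.2.tail.dropLast ++ [(wX ++ x.2.headI, true)]
    (2, τ.map Prod.fst, τ.map Prod.snd)
  else
    (x.1, (mergeMark x.2).map Prod.fst, (mergeMark x.2).map Prod.snd)

/-- The cyclic split of a merged parsing along a set of marks. -/
noncomputable def SplitC (q : ℕ × List PWord × List Bool) : ℕ × List PWord :=
  let τ := q.2.1.zip q.2.2
  if q.1 = 2 ∧ τ.getLast?.map Prod.snd = some true then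
    (0, ((τ.getLast?.map Prod.fst).getD []).tail :: (splitL τ.dropLast ++ [wX]))
  else
    (q.1, splitL τ)

/-- A merged cyclic parsing: an original cyclic parsing with no (cyclic) bad adjacency. -/
def MergedP (W : PWord) (r : ℕ) (L : List PWord) : Prop :=
  IsOrigCyclicParsing W r L ∧ List.Chain' (fun u v => ¬ Bad u v) L ∧
    ∀ h : L ≠ [], ¬ Bad (L.getLast h) (L.head h)

def Marksσ (lM : List PWord) (σ : List Bool) : Prop :=
  ∀ p ∈ lM.zip σ, p.2 = true → Mg p.1
lemma orig_ne_nil {w : PWord} (h : w ∈ origWords) : w ≠ [] := by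
  rw [orig_mem_iff] at h
  rcases h with h|h|h|h|h|h|h|h|h <;> subst h <;> simp [wX, wXA, wBA, wXXA, wXBA]

lemma not_bad_snd_len3 {u v : PWord} (hv : v.length = 3) : ¬ Bad u v := by
  rintro ⟨_, h | h⟩ <;> subst h <;> simp at hv

lemma mergeMark_fst_words {l : List PWord} (h : ∀ w ∈ l, w ∈ origWords) :
    ∀ w ∈ (mergeMark l).map Prod.fst, w ∈ origWords := by
  induction l using mergeMark.induct with
  | case1 => simp [mergeMark]
  | case2 w => simpa [mergeMark] using h
  | case3 u v t hc ih =>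
      rw [mergeMark, if_pos hc]
      intro w hw
      obtain ⟨p, hp, rfl⟩ := List.mem_map.1 hw
      rcases List.mem_cons.1 hp with rfl | hp'
      · obtain ⟨rfl, h2⟩ := hc
        rcases h2 with rfl | rfl <;> decide
      · exact ih (fun x hx => h x (by simp [List.mem_cons] at hx ⊢; tauto))
          p.1 (List.mem_map_of_mem hp')
  | case4 u v t hc ih =>
      rw [mergeMark, if_neg hc]
      intro w hw
      obtain ⟨p, hp, rfl⟩ := List.mem_map.1 hw
      rcases List.mem_cons.1 hp with rfl | hp'
      · exact h u (by simp)
      · exact ih (fun x hx => h x (by simp [List.mem_cons] at hx ⊢; tauto))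
          p.1 (List.mem_map_of_mem hp')

lemma mergeMark_length (l : List PWord) : (mergeMark l).length ≤ l.length := by
  induction l using mergeMark.induct with
  | case1 => simp [mergeMark]
  | case2 w => simp [mergeMark]
  | case3 u v t hc ih => rw [mergeMark, if_pos hc]; simp; omega
  | case4 u v t hc ih => rw [mergeMark, if_neg hc]; simpa using ih

lemma getLast?_eq_some_getLast {α : Type*} (l : List α) (h : l ≠ []) :
    l.getLast? = some (l.getLast h) := List.getLast?_eq_getLast h
lemma MergeC_correct {W : PWord} {r : ℕ} {l : List PWord}
    (h : IsOrigCyclicParsing W r l) (hr : r < W.length) :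
    MergedP W (MergeC (r, l)).1 (MergeC (r, l)).2.1 ∧
    (MergeC (r, l)).2.2.length = (MergeC (r, l)).2.1.length ∧
    Marksσ (MergeC (r, l)).2.1 (MergeC (r, l)).2.2 ∧
    (MergeC (r, l)).1 < W.length ∧
    (MergeC (r, l)).2.1.length ≤ l.length ∧
    SplitC (MergeC (r, l)) = (r, l) ∧
    parseVal origCoeff (splitL ((MergeC (r, l)).2.1.zip (MergeC (r, l)).2.2)) =
      parseVal origCoeff l := by
  obtain ⟨hwords, hne, hflat, hlast⟩ := h
  by_cases hseam : l.getLast? = some wX ∧ (l.head? = some wXA ∨ l.head? = some wBA)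
  · -- seam case
    obtain ⟨hlastX, hhead⟩ := hseam
    obtain ⟨h₀, T, rfl⟩ : ∃ h₀ T, l = h₀ :: T := by
      cases l with
      | nil => exact absurd rfl hne
      | cons a T => exact ⟨a, T, rfl⟩
    have hh0 : h₀ = wXA ∨ h₀ = wBA := by
      rcases hhead with hh | hh <;> simp only [List.head?_cons, Option.some_inj] at hh <;>
        [exact Or.inl hh; exact Or.inr hh]
    have hlen2 : h₀.length = 2 := by rcases hh0 with rfl | rfl <;> rfl
    have hTne : T ≠ [] := by
      rintro rfl
      simp only [List.getLast?_singleton, Option.some_inj] at hlastX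
      rcases hh0 with rfl | rfl <;> simp [wX, wXA, wBA] at hlastX
    obtain ⟨mid, rfl⟩ : ∃ mid, T = mid ++ [wX] := by
      refine ⟨T.dropLast, ?_⟩
      have h2' : (h₀ :: T).getLast? = T.getLast? := by
        cases T with
        | nil => exact absurd rfl hTne
        | cons b s => exact List.getLast?_cons_cons
      rw [h2'] at hlastX
      have h2 : T.getLast hTne = wX := (List.getLast_eq_iff_getLast?_eq_some hTne).2 hlastX
      rw [← h2]
      exact (List.dropLast_append_getLast hTne).symm
    have hr0 : r = 0 := by
      have hgl : (h₀ :: (mid ++ [wX])).getLast hne = wX := by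
        rw [List.getLast_eq_iff_getLast?_eq_some]
        exact hlastX
      rw [hgl] at hlast
      simp [wX] at hlast
      omega
    subst hr0
    rw [List.rotate_zero] at hflat
    have hWflat : W = h₀ ++ (mid.flatten ++ wX) := by
      rw [← hflat]
      simp [List.flatten_concat]
    have hcond : ((0:ℕ), h₀ :: (mid ++ [wX])).2.getLast? = some wX ∧
        (((0:ℕ), h₀ :: (mid ++ [wX])).2.head? = some wXA ∨
          ((0:ℕ), h₀ :: (mid ++ [wX])).2.head? = some wBA) := by
      exact ⟨hlastX, hhead⟩
    have hM : MergeC (0, h₀ :: (mid ++ [wX])) =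
        (2, (mergeMark mid ++ [(wX ++ h₀, true)]).map Prod.fst,
          (mergeMark mid ++ [(wX ++ h₀, true)]).map Prod.snd) := by
      rw [MergeC, if_pos hcond]
      simp [List.dropLast_concat]
    rw [hM]
    set τ : List (PWord × Bool) := mergeMark mid ++ [(wX ++ h₀, true)] with hτ
    have hmidwords : ∀ w ∈ mid, w ∈ origWords := by
      intro w hw; exact hwords w (by simp [hw])
    have hfstτ : τ.map Prod.fst = (mergeMark mid).map Prod.fst ++ [wX ++ h₀] := by
      simp [hτ]
    have hflatτ : (τ.map Prod.fst).flatten = mid.flatten ++ (wX ++ h₀) := by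
      rw [hfstτ, List.flatten_concat, mergeMark_fst_flatten]
    have hWlen : W.length = mid.flatten.length + 3 := by
      rw [hWflat]; simp [wX]; omega
    have hrot : W.rotate 2 = mid.flatten ++ (wX ++ h₀) := by
      rw [List.rotate_eq_drop_append_take (by omega), hWflat]
      rw [show (2:ℕ) = h₀.length from hlen2.symm]
      rw [List.drop_left, List.take_left]
      simp
    have hlastτ : (τ.map Prod.fst).getLast? = some (wX ++ h₀) := by
      rw [hfstτ, List.getLast?_concat]
    have hτne : τ.map Prod.fst ≠ [] := by simp [hτ]
    have hlen3 : (wX ++ h₀).length = 3 := by simp [wX]; omega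
    have hgl3 : (τ.map Prod.fst).getLast hτne = wX ++ h₀ :=
      (List.getLast_eq_iff_getLast?_eq_some hτne).2 hlastτ
    refine ⟨⟨⟨?_, hτne, ?_, ?_⟩, ?_, ?_⟩, by simp, ?_, by show 2 < W.length; omega, ?_, ?_, ?_⟩
    · -- words
      intro w hw
      rw [hfstτ] at hw
      rcases List.mem_append.1 hw with hw' | hw'
      · exact mergeMark_fst_words hmidwords w hw'
      · rcases List.mem_singleton.1 hw' with rfl
        rcases hh0 with rfl | rfl <;> decide
    · rw [hflatτ, hrot]
    · rw [hgl3, hlen3]; omega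
    · -- chain'
      rw [hfstτ, List.Chain', List.isChain_append]
      refine ⟨mergeMark_chain mid, by simp, ?_⟩
      intro x hx y hy
      simp only [List.head?_cons, Option.mem_def, Option.some_inj] at hy
      subst hy
      exact not_bad_snd_len3 hlen3
    · -- cyclic not bad
      intro hne'
      rw [hgl3]
      rintro ⟨hfst, _⟩
      have := congrArg List.length hfst
      simp [wX, hlen2] at this
    · -- Marksσ
      unfold Marksσ
      rw [zip_fst_snd]
      intro p hp hb
      rcases List.mem_append.1 hp with hp' | hp'
      · exact mergeMark_marks mid p hp' hb
      · rcases List.mem_singleton.1 hp' with rfl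
        rcases hh0 with rfl | rfl
        · exact Or.inl rfl
        · exact Or.inr rfl
    · -- length bound
      have := mergeMark_length mid
      simp [hτ]
      omega
    · -- SplitC inverse
      rw [SplitC]
      have hzz : (τ.map Prod.fst).zip (τ.map Prod.snd) = τ := zip_fst_snd τ
      simp only [hzz]
      have hlq : τ.getLast? = some (wX ++ h₀, true) := by
        rw [hτ, List.getLast?_concat]
      rw [if_pos (by simp [hlq])]
      simp only [hlq]
      have hdl : τ.dropLast = mergeMark mid := by
        rw [hτ, List.dropLast_concat]
      rw [hdl, splitL_mergeMark]
      simp [wX]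
    · -- parseVal equality (seam)
      rw [zip_fst_snd, hτ, splitL_append, splitL_mergeMark]
      rw [show splitL [(wX ++ h₀, true)] = [wX, h₀] by simp [splitL, splitTok, wX]]
      rw [parseVal_rot origCoeff h₀ (mid ++ [wX])]
      rw [List.append_assoc]
      rfl
  · -- generic case
    have hxq : l.getLast? = some (l.getLast hne) := List.getLast?_eq_getLast hne
    set x := l.getLast hne with hxdef
    have hM : MergeC (r, l) = (r, (mergeMark l).map Prod.fst, (mergeMark l).map Prod.snd) := by
      rw [MergeC, if_neg hseam]
    rw [hM]
    have hmmne : (mergeMark l).map Prod.fst ≠ [] := by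
      simp [mergeMark_eq_nil_iff, hne]
    obtain ⟨v, t, hlvt⟩ : ∃ v t, l = v :: t := by
      cases l with
      | nil => exact absurd rfl hne
      | cons a T => exact ⟨a, T, rfl⟩
    have hheadq : l.head? = some v := by rw [hlvt]; rfl
    have hheadmm : ∃ y b, (mergeMark l).head? = some (y, b) ∧ (y = l.head hne ∨ y.length = 3) := by
      obtain ⟨y, b, h1, h2⟩ := mergeMark_head v t
      refine ⟨y, b, by rw [hlvt]; exact h1, ?_⟩
      rcases h2 with rfl | h2
      · left
        rw [← Option.some_inj, ← List.head?_eq_head hne, hheadq]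
      · exact Or.inr h2
    rcases mergeMark_getLast? l x hxq with hml | ⟨hx2, hml⟩
    · -- last not merged
      have hgl : ((mergeMark l).map Prod.fst).getLast hmmne = x := by
        rw [List.getLast_eq_iff_getLast?_eq_some, List.getLast?_map, hml]
        rfl
      refine ⟨⟨⟨?_, hmmne, ?_, ?_⟩, mergeMark_chain l, ?_⟩, by simp, ?_, hr, ?_, ?_,
        by rw [zip_fst_snd, splitL_mergeMark]⟩
      · exact mergeMark_fst_words hwords
      · rw [mergeMark_fst_flatten]; exact hflat
      · rw [hgl]; exact hlast
      · -- cyclic not bad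
        intro hne'
        rw [hgl]
        rintro ⟨hfstX, hsnd⟩
        obtain ⟨y, b, hh1, hh2⟩ := hheadmm
        have hhd : ((mergeMark l).map Prod.fst).head hne' = y := by
          rw [← Option.some_inj, ← List.head?_eq_head, List.head?_map, hh1]
          rfl
        rw [hhd] at hsnd
        rcases hh2 with rfl | hlen3
        · apply hseam
          constructor
          · rw [hxq, hfstX]; rfl
          · rcases hsnd with hsn | hsn
            · left; rw [List.head?_eq_head hne, hsn]; rfl
            · right; rw [List.head?_eq_head hne, hsn]; rfl
        · rcases hsnd with hsn | hsn <;> rw [hsn] at hlen3 <;> simp [wXA, wBA] at hlen3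
      · -- Marksσ
        unfold Marksσ
        rw [zip_fst_snd]
        exact mergeMark_marks l
      · simpa using mergeMark_length l
      · -- SplitC
        rw [SplitC]
        simp only [zip_fst_snd]
        rw [if_neg (by rw [hml]; rintro ⟨_, hc⟩; simp at hc)]
        rw [splitL_mergeMark]
    · -- last merged
      have hxlen : x.length = 2 := by rcases hx2 with hx | hx <;> rw [hx] <;> rfl
      have hgl : ((mergeMark l).map Prod.fst).getLast hmmne = wX ++ x := by
        rw [List.getLast_eq_iff_getLast?_eq_some, List.getLast?_map, hml]
        rfl
      refine ⟨⟨⟨?_, hmmne, ?_, ?_⟩, mergeMark_chain l, ?_⟩, by simp, ?_, hr, ?_, ?_,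
        by rw [zip_fst_snd, splitL_mergeMark]⟩
      · exact mergeMark_fst_words hwords
      · rw [mergeMark_fst_flatten]; exact hflat
      · rw [hgl]; simp [wX]; omega
      · intro hne'
        rw [hgl]
        rintro ⟨hfst, _⟩
        have := congrArg List.length hfst
        simp [wX, hxlen] at this
      · unfold Marksσ
        rw [zip_fst_snd]
        exact mergeMark_marks l
      · simpa using mergeMark_length l
      · rw [SplitC]
        simp only [zip_fst_snd]
        rw [if_neg (by
          rw [hml]
          rintro ⟨hc, _⟩
          rw [hxlen] at hlast  -- r < 2 (since x.length = 2)
          omega)]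
        rw [splitL_mergeMark]
lemma parse_len {W : PWord} {r : ℕ} {L : List PWord} (h : IsOrigCyclicParsing W r L) :
    L.length ≤ W.length := by
  obtain ⟨hwords, hne, hflat, _⟩ := h
  have h1 := length_le_flatten L (fun w hw => orig_ne_nil (hwords w hw))
  rw [hflat, List.length_rotate] at h1
  exact h1

lemma Mg_tail {w : PWord} (h : Mg w) : w.tail = wXA ∨ w.tail = wBA :=
  (Mg_cons_tail h).2

lemma SplitC_correct {W : PWord} {r : ℕ} {lM : List PWord} {σ : List Bool}
    (h : MergedP W r lM) (hlen : σ.length = lM.length) (hσ : Marksσ lM σ)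
    (hr : r < W.length) :
    IsOrigCyclicParsing W (SplitC (r, lM, σ)).1 (SplitC (r, lM, σ)).2 ∧
    (SplitC (r, lM, σ)).1 < W.length ∧
    MergeC (SplitC (r, lM, σ)) = (r, lM, σ) := by
  obtain ⟨⟨hwords, hneM, hflat, hlast⟩, hchain, hcyc⟩ := h
  have hlen' : lM.length ≤ σ.length := le_of_eq hlen.symm
  set τ := lM.zip σ with hτdef
  have hfst : τ.map Prod.fst = lM := List.map_fst_zip hlen'
  have hsnd : τ.map Prod.snd = σ := List.map_snd_zip (le_of_eq hlen)
  have hτne : τ ≠ [] := by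
    intro hnil
    apply hneM
    rw [← hfst, hnil]
    rfl
  have hMarks : Marks τ := hσ
  have hchainτ : List.Chain' (fun u v => ¬ Bad u v) (τ.map Prod.fst) := by
    rw [hfst]; exact hchain
  set p := τ.getLast hτne with hpdef
  have hpq : τ.getLast? = some p := List.getLast?_eq_getLast hτne
  have hplM : lM.getLast hneM = p.1 := by
    rw [← Option.some_inj, ← List.getLast?_eq_getLast, ← hfst, List.getLast?_map, hpq]
    rfl
  rw [hplM] at hlast
  have hτdec : τ.dropLast ++ [p] = τ := List.dropLast_append_getLast hτne
  have hMarks' : Marks τ.dropLast := fun q hq hb =>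
    hMarks q ((List.dropLast_sublist τ).subset hq) hb
  have hfst' : τ.dropLast.map Prod.fst = lM.dropLast := by
    rw [List.map_dropLast, hfst]
  have hwords' : ∀ q ∈ τ.dropLast, q.1 ∈ origWords := by
    intro q hq
    apply hwords
    rw [← hfst]
    exact List.mem_map_of_mem ((List.dropLast_sublist τ).subset hq)
  have hwordsτ : ∀ q ∈ τ, q.1 ∈ origWords := by
    intro q hq
    apply hwords
    rw [← hfst]
    exact List.mem_map_of_mem hq
  have hchain' : List.Chain' (fun u v => ¬ Bad u v) (τ.dropLast.map Prod.fst) := by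
    rw [hfst']
    exact hchain.prefix (List.dropLast_prefix lM)
  by_cases hD : r = 2 ∧ (τ.getLast?.map Prod.snd = some true)
  · -- rotated split
    obtain ⟨hr2, hsndtrue⟩ := hD
    have hp2 : p.2 = true := by
      rw [hpq] at hsndtrue
      simpa using hsndtrue
    have hMg : Mg p.1 := hMarks p (List.getLast_mem hτne) hp2
    have hp1 : p.1 = wX ++ p.1.tail := (Mg_cons_tail hMg).1
    have htail : p.1.tail = wXA ∨ p.1.tail = wBA := Mg_tail hMg
    have hp1len : p.1.length = 3 := by rcases hMg with hm | hm <;> rw [hm] <;> rfl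
    have hS : SplitC (r, lM, σ) = (0, p.1.tail :: (splitL τ.dropLast ++ [wX])) := by
      rw [SplitC, if_pos ⟨hr2, hsndtrue⟩]
      simp only [← hτdef, hpq]
      rfl
    rw [hS]
    subst hr2
    -- decompose W
    have hflat' : (splitL τ.dropLast).flatten ++ p.1 = W.rotate 2 := by
      rw [splitL_flatten _ hMarks', hfst']
      rw [← hflat, ← List.flatten_concat]
      have hdec : lM.dropLast ++ [p.1] = lM := by
        rw [← hplM]
        exact List.dropLast_append_getLast hneM
      rw [hdec]
    have hn : W.length = (splitL τ.dropLast).flatten.length + 3 := by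
      have h1 := congrArg List.length hflat'
      rw [List.length_rotate, List.length_append, hp1len] at h1
      omega
    have hrot : W.rotate 2 = W.drop 2 ++ W.take 2 :=
      List.rotate_eq_drop_append_take (by omega)
    have heq : W.drop 2 ++ W.take 2 =
        ((splitL τ.dropLast).flatten ++ wX) ++ p.1.tail := by
      rw [← hrot, ← hflat']
      conv_lhs => rw [hp1]
      rw [List.append_assoc]
    have hlens : (W.drop 2).length = ((splitL τ.dropLast).flatten ++ wX).length := by
      rw [List.length_drop, List.length_append]
      rw [show wX.length = 1 from rfl]
      omega
    obtain ⟨hdrop, htake⟩ := List.append_inj heq hlens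
    have hW : W = p.1.tail ++ ((splitL τ.dropLast).flatten ++ wX) := by
      conv_lhs => rw [← List.take_append_drop 2 W]
      rw [htake, hdrop]
    have hcons : p.1.tail :: (splitL τ.dropLast ++ [wX]) =
        (p.1.tail :: splitL τ.dropLast) ++ [wX] := rfl
    have hglout : (p.1.tail :: (splitL τ.dropLast ++ [wX])).getLast? = some wX := by
      rw [hcons, List.getLast?_concat]
    have hne2 : p.1.tail :: (splitL τ.dropLast ++ [wX]) ≠ [] := by simp
    refine ⟨⟨?_, hne2, ?_, ?_⟩, by omega, ?_⟩
    · -- words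
      intro w hw
      rcases List.mem_cons.1 hw with rfl | hw'
      · rcases htail with hm | hm <;> rw [hm] <;> decide
      · rcases List.mem_append.1 hw' with hw'' | hw''
        · exact splitL_words τ.dropLast hMarks' hwords' w hw''
        · rcases List.mem_singleton.1 hw'' with rfl
          decide
    · rw [List.rotate_zero, List.flatten_cons, List.flatten_concat, hW]
    · rw [(List.getLast_eq_iff_getLast?_eq_some hne2).2 hglout]
      simp [wX]
    · -- MergeC inverse (seam)
      have hcond : ((0:ℕ), p.1.tail :: (splitL τ.dropLast ++ [wX])).2.getLast? = some wX ∧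
          (((0:ℕ), p.1.tail :: (splitL τ.dropLast ++ [wX])).2.head? = some wXA ∨
           ((0:ℕ), p.1.tail :: (splitL τ.dropLast ++ [wX])).2.head? = some wBA) := by
        refine ⟨hglout, ?_⟩
        rcases htail with hm | hm
        · left; rw [List.head?_cons, hm]
        · right; rw [List.head?_cons, hm]
      rw [MergeC, if_pos hcond]
      simp only [List.tail_cons, List.dropLast_concat, List.headI_cons]
      rw [mergeMark_splitL τ.dropLast hMarks' hchain']
      have hpp : (wX ++ p.1.tail, true) = p := by
        rw [← hp1, ← hp2]
      rw [hpp, hτdec, hfst, hsnd]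
  · -- plain split
    have hS : SplitC (r, lM, σ) = (r, splitL τ) := by
      rw [SplitC, if_neg hD]
    rw [hS]
    have hlastS := splitL_getLast? τ p hpq
    have hSne : splitL τ ≠ [] := by
      rw [Ne, splitL_eq_nil_iff]; exact hτne
    have hglS : (splitL τ).getLast hSne = if p.2 then p.1.tail else p.1 :=
      (List.getLast_eq_iff_getLast?_eq_some hSne).2 hlastS
    refine ⟨⟨?_, hSne, ?_, ?_⟩, hr, ?_⟩
    · exact splitL_words τ hMarks hwordsτ
    · rw [splitL_flatten _ hMarks, hfst]; exact hflat
    · rw [hglS]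
      by_cases hp2 : p.2
      · rw [if_pos hp2]
        have hMg : Mg p.1 := hMarks p (List.getLast_mem hτne) hp2
        have hp1len : p.1.length = 3 := by rcases hMg with hm | hm <;> rw [hm] <;> rfl
        have hr2 : r ≠ 2 := fun hc => hD ⟨hc, by rw [hpq]; simpa using hp2⟩
        have : (p.1.tail).length = 2 := by
          rcases Mg_tail hMg with hm | hm <;> rw [hm] <;> rfl
        omega
      · rw [if_neg hp2]; exact hlast
    · -- MergeC inverse
      have hnoseam : ¬((r, splitL τ).2.getLast? = some wX ∧
          ((r, splitL τ).2.head? = some wXA ∨ (r, splitL τ).2.head? = some wBA)) := by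
        rintro ⟨hlx, hhx⟩
        simp only at hlx hhx
        rw [hlastS] at hlx
        by_cases hp2 : p.2
        · rw [if_pos hp2] at hlx
          have hMg : Mg p.1 := hMarks p (List.getLast_mem hτne) hp2
          rcases Mg_tail hMg with hm | hm <;> rw [hm] at hlx <;> simp [wX, wXA, wBA] at hlx
        · rw [if_neg hp2] at hlx
          -- p.1 = wX, so head of splitL must not be XA/BA
          obtain ⟨q, hq⟩ : ∃ q, τ.head? = some q :=
            ⟨τ.head hτne, List.head?_eq_head hτne⟩
          have hheadS := splitL_head? τ q hq
          have hq1 : lM.head hneM = q.1 := by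
            rw [← Option.some_inj, ← List.head?_eq_head, ← hfst, List.head?_map, hq]
            rfl
          by_cases hq2 : q.2
          · rw [hheadS, if_pos hq2] at hhx
            rcases hhx with hh | hh <;> simp [wX, wXA, wBA] at hh
          · rw [hheadS, if_neg hq2] at hhx
            apply hcyc hneM
            refine ⟨by rw [hplM]; simpa [wX] using hlx, ?_⟩
            rw [hq1]
            rcases hhx with hh | hh
            · left; simpa [wXA] using hh
            · right; simpa [wBA] using hh
      rw [MergeC, if_neg hnoseam]
      simp only
      rw [mergeMark_splitL τ hMarks hchainτ, hfst, hsnd]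
/-- the modified coefficients after summing over splittings -/
def modCoeff (w : PWord) : ℤ :=
  if w = wXXA then -1 else if w = wXBA then 0 else origCoeff w

lemma parseVal_nil (c : PWord → ℤ) : parseVal c [] = 1 := by
  simp [parseVal]

lemma sum_sigma_split {n : ℕ} (lM : List PWord) (hlen : lM.length ≤ n) :
    (∑ σ ∈ listsLE Bool n,
      if σ.length = lM.length ∧ Marksσ lM σ then
        parseVal origCoeff (splitL (lM.zip σ)) else 0) =
      parseVal modCoeff lM := by
  rw [← Finset.sum_subset (s₁ := listsLen Bool lM.length)
    (by intro σ hσ; rw [mem_listsLen] at hσ; rw [mem_listsLE]; omega)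
    (by
      intro σ hσ hnot
      rw [mem_listsLen] at hnot
      rw [if_neg (by tauto)])]
  have h2 : ∀ σ ∈ listsLen Bool lM.length,
      (if σ.length = lM.length ∧ Marksσ lM σ then
        parseVal origCoeff (splitL (lM.zip σ)) else 0) =
      (if Marksσ lM σ then parseVal origCoeff (splitL (lM.zip σ)) else 0) := by
    intro σ hσ
    rw [mem_listsLen] at hσ
    by_cases hm : Marksσ lM σ
    · rw [if_pos ⟨hσ, hm⟩, if_pos hm]
    · rw [if_neg (by tauto), if_neg hm]
  rw [Finset.sum_congr rfl h2]
  clear hlen h2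
  induction lM with
  | nil =>
      simp only [List.length_nil]
      rw [show listsLen Bool 0 = {[]} from rfl]
      rw [Finset.sum_singleton]
      rw [if_pos (by intro p hp; simp at hp)]
      simp [parseVal_nil]
  | cons w t ih =>
      rw [show (w :: t).length = t.length + 1 from rfl, listsLen,
        Finset.sum_image (by intro p _ q _ h; simpa [Prod.ext_iff] using h),
        Finset.sum_product]
      have hterm : ∀ (b : Bool) (σ : List Bool),
          (if Marksσ (w :: t) (b :: σ) then
            parseVal origCoeff (splitL ((w :: t).zip (b :: σ))) else 0) =
          (if (b = true → Mg w) then parseVal origCoeff (splitTok (w, b)) else 0) *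
            (if Marksσ t σ then parseVal origCoeff (splitL (t.zip σ)) else 0) := by
        intro b σ
        have hz : (w :: t).zip (b :: σ) = (w, b) :: t.zip σ := rfl
        have hM : Marksσ (w :: t) (b :: σ) ↔ (b = true → Mg w) ∧ Marksσ t σ := by
          constructor
          · intro hm
            exact ⟨fun hb => hm (w, b) (by rw [hz]; exact List.mem_cons_self) hb,
              fun p hp hb => hm p (by rw [hz]; exact List.mem_cons_of_mem _ hp) hb⟩
          · rintro ⟨h1, h2⟩ p hp hb
            rw [hz] at hp
            rcases List.mem_cons.1 hp with rfl | hp'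
            · exact h1 hb
            · exact h2 p hp' hb
        rw [hz, splitL_cons, parseVal_append]
        by_cases h1 : (b = true → Mg w) <;> by_cases h2 : Marksσ t σ
        · rw [if_pos (hM.2 ⟨h1, h2⟩), if_pos h1, if_pos h2]
        · rw [if_neg (fun hc => h2 (hM.1 hc).2), if_neg h2, mul_zero]
        · rw [if_neg (fun hc => h1 (hM.1 hc).1), if_neg h1, zero_mul]
        · rw [if_neg (fun hc => h1 (hM.1 hc).1), if_neg h1, zero_mul]
      simp only [hterm]
      rw [← Finset.sum_mul_sum]
      rw [ih]
      have hsum : (∑ b : Bool, if (b = true → Mg w) then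
          parseVal origCoeff (splitTok (w, b)) else 0) = parseVal modCoeff [w] := by
        rw [Fintype.sum_bool]
        by_cases hmg : Mg w
        · rw [if_pos (fun _ => hmg), if_pos (by simp)]
          rcases hmg with rfl | rfl
          · show parseVal origCoeff [wX, wXA] + parseVal origCoeff [wXXA] = _
            unfold parseVal
            rw [show (List.map origCoeff [wX, wXA]).prod = 1 by decide,
              show (List.map origCoeff [wXXA]).prod = -2 by decide,
              show (List.map modCoeff [wXXA]).prod = -1 by decide,
              show (List.map wordWt [wX, wXA]).sum = 1 by decide,
              show (List.map wordWt [wXXA]).sum = 1 by decide]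
            rw [show (-1 : ℤ) = 1 + -2 by ring, map_add, add_mul]
          · show parseVal origCoeff [wX, wBA] + parseVal origCoeff [wXBA] = _
            unfold parseVal
            rw [show (List.map origCoeff [wX, wBA]).prod = -1 by decide,
              show (List.map origCoeff [wXBA]).prod = 1 by decide,
              show (List.map modCoeff [wXBA]).prod = 0 by decide,
              show (List.map wordWt [wX, wBA]).sum = 1 by decide,
              show (List.map wordWt [wXBA]).sum = 1 by decide]
            rw [show (0 : ℤ) = -1 + 1 by ring, map_add, add_mul]
        · rw [if_neg (fun hc => hmg (hc rfl)), if_pos (by simp), zero_add]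
          show parseVal origCoeff [w] = _
          unfold parseVal
          congr 2
          simp only [List.map_cons, List.map_nil]
          have : modCoeff w = origCoeff w := by
            unfold modCoeff
            rw [if_neg (fun hc => hmg (Or.inl hc)), if_neg (fun hc => hmg (Or.inr hc))]
          rw [this]
      rw [hsum, ← parseVal_append]
      rfl
lemma tight_mem_orig {w : PWord} (h : w ∈ tightWords) : w ∈ origWords :=
  List.mem_append_left _ h

lemma mem_orig_cases {w : PWord} (h : w ∈ origWords) : w ∈ tightWords ∨ w = wXBA := by
  rcases List.mem_append.1 h with h' | h'
  · exact Or.inl h'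
  · right; simpa [wXBA] using h'

lemma modCoeff_eq_tight {w : PWord} (h : w ∈ tightWords) : modCoeff w = tightCoeff w := by
  simp only [tightWords, List.mem_cons, List.mem_singleton, List.not_mem_nil, or_false] at h
  rcases h with h|h|h|h|h|h|h|h <;> subst h <;> decide

lemma XBA_not_tight : wXBA ∉ tightWords := by decide

lemma modCoeff_XBA : modCoeff wXBA = 0 := by decide

lemma pointD (W : PWord) (r : ℕ) (lM : List PWord) :
    (if MergedP W r lM then parseVal modCoeff lM else 0) =
    (if IsCyclicParsing W r lM then parseVal tightCoeff lM else 0) := by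
  by_cases hM : MergedP W r lM
  · by_cases hXBA : wXBA ∈ lM
    · rw [if_pos hM, parseVal_zero hXBA modCoeff_XBA]
      rw [if_neg (fun hC => XBA_not_tight (hC.1.1 wXBA hXBA))]
    · have hC : IsCyclicParsing W r lM := by
        obtain ⟨⟨hw, hne, hfl, hlt⟩, hch, hcyc⟩ := hM
        refine ⟨⟨fun w hw' => ?_, hch⟩, hne, hfl, hlt, hcyc hne⟩
        rcases mem_orig_cases (hw w hw') with h | rfl
        · exact h
        · exact absurd hw' hXBA
      rw [if_pos hM, if_pos hC]
      exact parseVal_congr fun w hw' => modCoeff_eq_tight (hC.1.1 w hw')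
  · rw [if_neg hM, if_neg (fun hC => hM ?_)]
    obtain ⟨⟨hw, hch⟩, hne, hfl, hlt, hcyc⟩ := hC
    exact ⟨⟨fun w h => tight_mem_orig (hw w h), hne, hfl, hlt⟩, hch, fun _ => hcyc⟩

end MergeSplit
-- MORE

/-- For every cyclic sentence, the value computed in the original puzzle equals the
value computed in the tight puzzle. -/
theorem origCycVal_eq_cycVal (W : PWord) : origCycVal W = cycVal W := by
  classical
  set n := W.length with hn
  have hA : origCycVal W = ∑ p ∈ (Finset.range n) ×ˢ WL n,
      (if IsOrigCyclicParsing W p.1 p.2 then parseVal origCoeff p.2 else 0) := by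
    rw [origCycVal, Finset.sum_product]
    exact Finset.sum_congr rfl fun r _ =>
      sum_words n (fun L => if IsOrigCyclicParsing W r L then parseVal origCoeff L else 0)
  have hE : cycVal W = ∑ p ∈ (Finset.range n) ×ˢ WL n,
      (if IsCyclicParsing W p.1 p.2 then parseVal tightCoeff p.2 else 0) := by
    rw [cycVal, Finset.sum_product]
    exact Finset.sum_congr rfl fun r _ =>
      sum_words n (fun L => if IsCyclicParsing W r L then parseVal tightCoeff L else 0)
  rw [hA, hE, ← Finset.sum_filter, ← Finset.sum_filter]
  have hbij : (∑ p ∈ ((Finset.range n) ×ˢ WL n).filter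
        (fun p => IsOrigCyclicParsing W p.1 p.2), parseVal origCoeff p.2) =
      ∑ q ∈ ((Finset.range n) ×ˢ (WL n ×ˢ listsLE Bool n)).filter
        (fun q => MergedP W q.1 q.2.1 ∧ q.2.2.length = q.2.1.length ∧ Marksσ q.2.1 q.2.2),
        parseVal origCoeff (splitL (q.2.1.zip q.2.2)) := by
    refine Finset.sum_nbij' MergeC SplitC ?_ ?_ ?_ ?_ ?_
    · rintro ⟨r, l⟩ ha
      simp only [Finset.mem_filter, Finset.mem_product, Finset.mem_range] at ha
      obtain ⟨⟨hr, hWl⟩, hP⟩ := ha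
      obtain ⟨hMP, hleneq, hmk, hrlt, hlenle, hSM, hval⟩ := MergeC_correct hP hr
      simp only [Finset.mem_filter, Finset.mem_product, Finset.mem_range]
      refine ⟨⟨hrlt, ?_, ?_⟩, hMP, hleneq, hmk⟩
      · rw [mem_WL]
        refine ⟨le_trans hlenle (le_trans ((mem_WL).1 hWl).1 le_rfl), ?_⟩
        exact hMP.1.1
      · rw [mem_listsLE, hleneq]
        exact le_trans hlenle ((mem_WL).1 hWl).1
    · rintro ⟨r, lM, σ⟩ hb
      simp only [Finset.mem_filter, Finset.mem_product, Finset.mem_range] at hb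
      obtain ⟨⟨hr, hWl, hBl⟩, hMP, hleneq, hmk⟩ := hb
      obtain ⟨hP, hrlt, hMS⟩ := SplitC_correct hMP hleneq hmk hr
      simp only [Finset.mem_filter, Finset.mem_product, Finset.mem_range]
      refine ⟨⟨hrlt, ?_⟩, hP⟩
      rw [mem_WL]
      exact ⟨parse_len hP, hP.1⟩
    · rintro ⟨r, l⟩ ha
      simp only [Finset.mem_filter, Finset.mem_product, Finset.mem_range] at ha
      obtain ⟨⟨hr, hWl⟩, hP⟩ := ha
      exact (MergeC_correct hP hr).2.2.2.2.2.1
    · rintro ⟨r, lM, σ⟩ hb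
      simp only [Finset.mem_filter, Finset.mem_product, Finset.mem_range] at hb
      obtain ⟨⟨hr, hWl, hBl⟩, hMP, hleneq, hmk⟩ := hb
      exact (SplitC_correct hMP hleneq hmk hr).2.2
    · rintro ⟨r, l⟩ ha
      simp only [Finset.mem_filter, Finset.mem_product, Finset.mem_range] at ha
      obtain ⟨⟨hr, hWl⟩, hP⟩ := ha
      exact ((MergeC_correct hP hr).2.2.2.2.2.2).symm
  rw [hbij]
  have hC : (∑ q ∈ ((Finset.range n) ×ˢ (WL n ×ˢ listsLE Bool n)).filter
        (fun q => MergedP W q.1 q.2.1 ∧ q.2.2.length = q.2.1.length ∧ Marksσ q.2.1 q.2.2),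
        parseVal origCoeff (splitL (q.2.1.zip q.2.2))) =
      ∑ p ∈ ((Finset.range n) ×ˢ WL n).filter (fun p => MergedP W p.1 p.2),
        parseVal modCoeff p.2 := by
    rw [Finset.sum_filter, Finset.sum_filter, Finset.sum_product, Finset.sum_product]
    refine Finset.sum_congr rfl fun r _ => ?_
    rw [Finset.sum_product]
    refine Finset.sum_congr rfl fun lM hlM => ?_
    by_cases hM : MergedP W r lM
    · rw [if_pos hM]
      rw [← sum_sigma_split (n := n) lM ((mem_WL).1 hlM).1]
      refine Finset.sum_congr rfl fun σ _ => ?_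
      by_cases hcond : σ.length = lM.length ∧ Marksσ lM σ
      · rw [if_pos ⟨hM, hcond.1, hcond.2⟩, if_pos hcond]
      · rw [if_neg (by tauto), if_neg hcond]
    · rw [if_neg hM]
      refine Finset.sum_eq_zero fun σ _ => ?_
      rw [if_neg (by tauto)]
  rw [hC, Finset.sum_filter, Finset.sum_filter]
  exact Finset.sum_congr rfl fun p _ => pointD W p.1 p.2
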